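/- Let P and K be compact subsets of ℕ^ℕ. Then every homeomorphism f : P → K can be extended to a homeomorphism of ℕ^ℕ onto itself. -/

import Mathlib

open Topology Set

namespace KR

open PiNat

abbrev X := ℕ → ℕ

/-- restriction to first `m` coordinates -/
def res' (m : ℕ) (x : X) : Fin m → ℕ := fun i => x i

lemma continuous_res' (m : ℕ) : Continuous (res' m) :=
  continuous_pi fun i => continuous_apply _

lemma isClopen_preimage_res' (m : ℕ) (S : Set (Fin m → ℕ)) :
    IsClopen (res' m ⁻¹' S) :=
  ⟨(isClosed_discrete S).preimage (continuous_res' m),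
   (isOpen_discrete S).preimage (continuous_res' m)⟩

lemma mem_cylinder_iff' {x y : X} {n : ℕ} : y ∈ cylinder x n ↔ res' n y = res' n x := by
  rw [PiNat.mem_cylinder_iff, funext_iff]
  constructor
  · intro h i; exact h i i.2
  · intro h i hi; exact h ⟨i, hi⟩

lemma cylinder_eq_preimage (x : X) (n : ℕ) :
    cylinder x n = res' n ⁻¹' {res' n x} := by
  ext y; simp only [mem_preimage, mem_singleton_iff, ← mem_cylinder_iff']

lemma isClopen_cylinder (x : X) (n : ℕ) : IsClopen (cylinder x n) := by
  rw [cylinder_eq_preimage]; exact isClopen_preimage_res' _ _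

lemma cylinder_eq_of_mem {x y : X} {n : ℕ} (h : y ∈ cylinder x n) :
    cylinder y n = cylinder x n := by
  ext z
  rw [mem_cylinder_iff'] at h ⊢
  rw [mem_cylinder_iff', h]

/-- cylinders form a neighborhood basis -/
lemma exists_cylinder_subset {x : X} {s : Set X} (hs : s ∈ 𝓝 x) :
    ∃ n, cylinder x n ⊆ s := by
  obtain ⟨t, ⟨z, n, rfl⟩, hxt, hts⟩ :=
    (isTopologicalBasis_cylinders (fun _ : ℕ => ℕ)).mem_nhds_iff.1 hs
  exact ⟨n, by rw [cylinder_eq_of_mem hxt]; exact hts⟩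

lemma cylinder_mem_nhds (x : X) (n : ℕ) : cylinder x n ∈ 𝓝 x :=
  (isOpen_cylinder _ _ _).mem_nhds (self_mem_cylinder x n)

/-- a compact set misses some cylinder around any point outside it -/
lemma exists_cylinder_disjoint {P : Set X} (hP : IsCompact P) {x : X} (hx : x ∉ P) :
    ∃ n, cylinder x n ∩ P = ∅ := by
  have : Pᶜ ∈ 𝓝 x := hP.isClosed.isOpen_compl.mem_nhds hx
  obtain ⟨n, hn⟩ := exists_cylinder_subset this
  exact ⟨n, by rw [Set.eq_empty_iff_forall_notMem]; exact fun y ⟨h1, h2⟩ => hn h1 h2⟩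

/-- a nonempty open set is not contained in a compact set -/
lemma exists_mem_not_mem_compact {U P : Set X} (hU : IsOpen U) (hne : U.Nonempty)
    (hP : IsCompact P) : ∃ c ∈ U, c ∉ P := by
  obtain ⟨x, hx⟩ := hne
  obtain ⟨n, hn⟩ := exists_cylinder_subset (hU.mem_nhds hx)
  -- the n-th coordinate of P is bounded
  have hcomp : IsCompact ((fun z : X => z n) '' P) := hP.image (continuous_apply n)
  have hfin : ((fun z : X => z n) '' P).Finite := hcomp.finite_of_discrete
  obtain ⟨b, hb⟩ := hfin.bddAbove
  classical
  set c : X := fun i => if i = n then b + 1 else x i with hc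
  refine ⟨c, hn ?_, fun hcmem => ?_⟩
  · intro i hi
    simp only [hc]
    rw [if_neg (by omega)]
  · have : c n ∈ (fun z : X => z n) '' P := ⟨c, hcmem, rfl⟩
    have := hb this
    simp [hc] at this
lemma agree_trans {n : ℕ} {x y z : X} (h1 : y ∈ cylinder x n) (h2 : z ∈ cylinder y n) :
    z ∈ cylinder x n := by rw [← cylinder_eq_of_mem h1]; exact h2

/-- uniform openness: compact set inside an open set, uniform cylinder length -/
lemma exists_uniform_cylinder_subset {A U : Set X} (hA : IsCompact A) (hU : IsOpen U)
    (hAU : A ⊆ U) : ∃ m, ∀ x ∈ A, cylinder x m ⊆ U := by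
  -- cover A by cylinders inside U
  have H : ∀ x ∈ A, ∃ m, cylinder x m ⊆ U := fun x hx =>
    exists_cylinder_subset (hU.mem_nhds (hAU hx))
  choose! g hg using H
  obtain ⟨t, htA, htcov⟩ := hA.elim_nhds_subcover (fun x => cylinder x (g x))
    (fun x hx => cylinder_mem_nhds x (g x))
  classical
  refine ⟨(t.sup g), fun x hx => ?_⟩
  obtain ⟨y, hyt, hxy⟩ := Set.mem_iUnion₂.1 (htcov hx)
  have hgy : g y ≤ t.sup g := Finset.le_sup hyt
  intro z hz
  have hz' : z ∈ cylinder x (g y) := PiNat.cylinder_anti _ hgy hz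
  exact hg y (htA y hyt) (agree_trans hxy hz')


theorem sigma_homeo (ι : Type) [Countable ι] [Nonempty ι] :
    Nonempty ((Σ _ : ι, X) ≃ₜ X) := by
  classical
  have hcount : Countable (ι × ℕ) := inferInstance
  have hinf : Infinite (ι × ℕ) := inferInstance
  obtain ⟨hd⟩ := nonempty_denumerable (ι × ℕ)
  let q : ι × ℕ ≃ ℕ := @Denumerable.eqv _ hd
  -- encode / decode
  let enc : (Σ _ : ι, X) → X := fun p => fun k => if k = 0 then q (p.1, p.2 0) else p.2 k
  let dec : X → (Σ _ : ι, X) := fun x =>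
    ⟨(q.symm (x 0)).1, fun k => if k = 0 then (q.symm (x 0)).2 else x k⟩
  have hde : ∀ p, dec (enc p) = p := by
    rintro ⟨i, x⟩
    have h0 : enc ⟨i, x⟩ 0 = q (i, x 0) := if_pos rfl
    simp only [dec, h0, Equiv.symm_apply_apply]
    congr 1
    funext k
    by_cases hk : k = 0
    · subst hk; simp [enc, h0]
    · simp [enc, hk]
  have hed : ∀ x, enc (dec x) = x := by
    intro x
    funext k
    by_cases hk : k = 0
    · subst hk
      have h0 : dec x = ⟨(q.symm (x 0)).1, fun k => if k = 0 then (q.symm (x 0)).2 else x k⟩ := rfl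
      simp [enc, h0, Equiv.apply_symm_apply]
    · simp [dec, enc, hk]
  refine ⟨Homeomorph.mk ⟨enc, dec, hde, hed⟩ ?_ ?_⟩
  · -- continuity of enc
    apply continuous_sigma
    intro i
    apply continuous_pi
    intro k
    show Continuous fun a : X => (if k = 0 then q (i, a 0) else a k)
    by_cases hk : k = 0
    · subst hk
      simp only [if_pos rfl]
      exact (continuous_of_discreteTopology (f := fun m : ℕ => q (i, m))).comp
        (continuous_apply 0)
    · simp only [if_neg hk]
      exact continuous_apply k
  · -- continuity of dec
    rw [continuous_iff_continuousAt]
    intro x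
    have hbody : Continuous (fun y : X => (fun k => if k = 0 then (q.symm (y 0)).2 else y k : X)) := by
      apply continuous_pi
      intro k
      by_cases hk : k = 0
      · subst hk
        simp only [if_pos rfl]
        exact (continuous_of_discreteTopology (f := fun m : ℕ => (q.symm m).2)).comp
          (continuous_apply 0)
      · simp only [if_neg hk]
        exact continuous_apply k
    have hcont : Continuous (fun y : X =>
        (⟨(q.symm (x 0)).1, fun k => if k = 0 then (q.symm (y 0)).2 else y k⟩ : Σ _ : ι, X)) :=
      continuous_sigmaMk.comp hbody
    apply hcont.continuousAt.congr
    have hnb : cylinder x 1 ∈ 𝓝 x := (isOpen_cylinder _ _ _).mem_nhds (self_mem_cylinder x 1)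
    filter_upwards [hnb] with y hy
    have h0 : y 0 = x 0 := PiNat.mem_cylinder_iff.1 hy 0 (by norm_num)
    simp only [dec, h0]


/-! ### Every nonempty clopen subset of `ℕ → ℕ` is homeomorphic to `ℕ → ℕ` -/

noncomputable section
open scoped Classical

/-- `myres z n` is the list of the first `n` values of `z`. -/
def myres (z : X) (n : ℕ) : List ℕ := (List.range n).map z

@[simp] lemma myres_length (z : X) (n : ℕ) : (myres z n).length = n := by
  simp [myres]

lemma myres_getD {z : X} {n i : ℕ} (h : i < n) : (myres z n).getD i 0 = z i := by
  rw [List.getD_eq_getElem _ _ (by simpa using h)]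
  simp [myres]

lemma myres_eq_myres {y z : X} {n : ℕ} : myres y n = myres z n ↔ y ∈ cylinder z n := by
  rw [PiNat.mem_cylinder_iff, myres, myres, List.map_eq_map_iff]
  simp

/-- least cylinder length around `z` contained in `A` (junk value `0` outside). -/
def nA (A : Set X) (z : X) : ℕ :=
  if h : ∃ n, cylinder z n ⊆ A then Nat.find h else 0

lemma nA_spec {A : Set X} (hA : IsOpen A) {z : X} (hz : z ∈ A) :
    cylinder z (nA A z) ⊆ A := by
  have h : ∃ n, cylinder z n ⊆ A := exists_cylinder_subset (hA.mem_nhds hz)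
  rw [nA, dif_pos h]
  exact Nat.find_spec h

lemma nA_min {A : Set X} (hA : IsOpen A) {z : X} (hz : z ∈ A) {m : ℕ} (hm : m < nA A z) :
    ¬ cylinder z m ⊆ A := by
  have h : ∃ n, cylinder z n ⊆ A := exists_cylinder_subset (hA.mem_nhds hz)
  rw [nA, dif_pos h] at hm
  exact Nat.find_min h hm

/-- key uniqueness: anything in the minimal cylinder of `z` has the same minimal cylinder. -/
lemma nA_eq_of_mem {A : Set X} (hA : IsOpen A) {z w : X} (hz : z ∈ A)
    (hw : w ∈ cylinder z (nA A z)) : nA A w = nA A z := by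
  have hcyl : cylinder w (nA A z) = cylinder z (nA A z) := cylinder_eq_of_mem hw
  have hwA : w ∈ A := nA_spec hA hz (by rw [← hcyl]; exact self_mem_cylinder _ _)
  have hle : nA A w ≤ nA A z := by
    by_contra hlt
    push_neg at hlt
    exact nA_min hA hwA (m := nA A z) hlt (by rw [hcyl]; exact nA_spec hA hz)
  rcases eq_or_lt_of_le hle with h | h
  · exact h
  · exfalso
    have hzw : z ∈ cylinder w (nA A w) := by
      have : z ∈ cylinder w (nA A z) := by rw [hcyl]; exact self_mem_cylinder _ _
      exact PiNat.cylinder_anti _ h.le this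
    have : cylinder z (nA A w) = cylinder w (nA A w) :=
      cylinder_eq_of_mem (by rw [PiNat.mem_cylinder_comm] at hzw ⊢; exact hzw)
    exact nA_min hA hz h (by rw [this]; exact nA_spec hA hwA)

/-- the index set of minimal cylinders of a clopen set -/
def Idx (A : Set X) : Set (List ℕ) := {l | ∃ z ∈ A, myres z (nA A z) = l}

/-- extension of a list by an element of `X` -/
def extL (l : List ℕ) (w : X) : X := fun i =>
  if i < l.length then l.getD i 0 else w (i - l.length)

lemma extL_mem {A : Set X} (hA : IsOpen A) {z : X} (hz : z ∈ A) (w : X) :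
    extL (myres z (nA A z)) w ∈ cylinder z (nA A z) := by
  intro i hi
  rw [extL]
  simp only [myres_length]
  rw [if_pos hi, myres_getD hi]

theorem clopen_homeo {A : Set X} (hA : IsClopen A) (hne : A.Nonempty) :
    Nonempty (↥A ≃ₜ X) := by
  classical
  have hAo := hA.2
  -- the equivalence with the sigma type
  have hIne : Nonempty ↥(Idx A) := by
    obtain ⟨z, hz⟩ := hne
    exact ⟨⟨myres z (nA A z), z, hz, rfl⟩⟩
  let g : ↥A → (Σ _ : ↥(Idx A), X) := fun a =>
    ⟨⟨myres ↑a (nA A ↑a), ↑a, a.2, rfl⟩, fun k => (a : X) (k + nA A ↑a)⟩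
  let h : (Σ _ : ↥(Idx A), X) → ↥A := fun p =>
    ⟨extL p.1.1 p.2, by
      obtain ⟨z, hz, hzl⟩ := p.1.2
      rw [← hzl]
      exact nA_spec hAo hz (extL_mem hAo hz p.2)⟩
  -- extL produces a point with the same minimal cylinder data
  have hkey : ∀ (z : X), z ∈ A → ∀ w : X,
      nA A (extL (myres z (nA A z)) w) = nA A z := by
    intro z hz w
    exact nA_eq_of_mem hAo hz (extL_mem hAo hz w)
  have hgh : ∀ p, g (h p) = p := by
    rintro ⟨⟨l, hl⟩, w⟩
    obtain ⟨z, hz, rfl⟩ := hl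
    set n := nA A z with hn
    set e := extL (myres z n) w with he
    have hnae : nA A e = n := hkey z hz w
    have hecyl : e ∈ cylinder z n := extL_mem hAo hz w
    have h1 : myres e (nA A e) = myres z n := by
      rw [hnae]; exact myres_eq_myres.2 hecyl
    refine Sigma.ext (Subtype.ext h1) (heq_of_eq ?_)
    funext k
    show e (k + nA A e) = w k
    rw [hnae]
    have : ¬ (k + n < (myres z n).length) := by simp
    rw [he, extL]
    simp only [myres_length]
    rw [if_neg (by omega)]
    congr 1
    omega
  have hhg : ∀ a, h (g a) = a := by
    rintro ⟨a, ha⟩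
    apply Subtype.ext
    show extL (myres a (nA A a)) _ = a
    funext i
    rw [extL]
    simp only [myres_length]
    by_cases hi : i < nA A a
    · rw [if_pos hi, myres_getD hi]
    · rw [if_neg hi]
      show a (i - nA A a + nA A a) = a i
      congr 1
      omega
  -- continuity of g
  have hgc : Continuous g := by
    rw [continuous_iff_continuousAt]
    intro a
    set n := nA A ↑a with hn
    set G : ↥A → (Σ _ : ↥(Idx A), X) := fun a' =>
      ⟨⟨myres ↑a n, ↑a, a.2, rfl⟩, fun k => (a' : X) (k + n)⟩ with hG
    have hGc : Continuous G := by
      apply (continuous_sigmaMk (σ := fun _ : ↥(Idx A) => X)).comp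
      apply continuous_pi
      intro k
      exact (continuous_apply (k + n)).comp continuous_subtype_val
    apply hGc.continuousAt.congr
    have hnb : (Subtype.val ⁻¹' cylinder ↑a n : Set ↥A) ∈ 𝓝 a := by
      apply ContinuousAt.preimage_mem_nhds continuous_subtype_val.continuousAt
      exact cylinder_mem_nhds _ _
    filter_upwards [hnb] with a' ha'
    have hna' : nA A ↑a' = n := nA_eq_of_mem hAo a.2 ha'
    show G a' = g a'
    have h1 : myres ↑a n = myres ↑a' (nA A ↑a') := by
      rw [hna']; exact (myres_eq_myres.2 ha').symm
    exact Sigma.ext (Subtype.ext h1) (heq_of_eq (by funext k; show (a' : X) _ = (a' : X) _; rw [hna']))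
  -- continuity of h
  have hhc : Continuous h := by
    apply continuous_sigma
    rintro ⟨l, hl⟩
    apply Continuous.subtype_mk
    apply continuous_pi
    intro i
    show Continuous fun w : X => if i < l.length then l.getD i 0 else w (i - l.length)
    by_cases hi : i < l.length
    · simp only [if_pos hi]; exact continuous_const
    · simp only [if_neg hi]; exact continuous_apply _
  obtain ⟨e2⟩ := sigma_homeo ↥(Idx A)
  exact ⟨(Homeomorph.mk ⟨g, h, hhg, hgh⟩ hgc hhc).trans e2⟩

end

/-! ### The graph relation of the homeomorphism and its properties -/

/-- Data of a "homeomorphism graph" between compact sets `P` and `K`. -/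
structure KRData (P K : Set X) (R : X → X → Prop) : Prop where
  compP : IsCompact P
  compK : IsCompact K
  dom : ∀ x, (∃ y, R x y) ↔ x ∈ P
  ran : ∀ y, (∃ x, R x y) ↔ y ∈ K
  funct : ∀ {x y y'}, R x y → R x y' → y = y'
  inj : ∀ {x x' y}, R x y → R x' y → x = x'
  cont : ∀ n, ∃ m, ∀ {x y x' y'}, R x y → R x' y' → x' ∈ cylinder x m → y' ∈ cylinder y n
  cont' : ∀ n, ∃ m, ∀ {x y x' y'}, R x y → R x' y' → y' ∈ cylinder y m → x' ∈ cylinder x n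

namespace KRData

variable {P K : Set X} {R : X → X → Prop}

lemma swap (D : KRData P K R) : KRData K P (flip R) where
  compP := D.compK
  compK := D.compP
  dom := D.ran
  ran := D.dom
  funct := fun h h' => D.inj h h'
  inj := fun h h' => D.funct h h'
  cont := fun n => by
    obtain ⟨m, hm⟩ := D.cont' n
    exact ⟨m, fun h h' hc => hm h h' hc⟩
  cont' := fun n => by
    obtain ⟨m, hm⟩ := D.cont n
    exact ⟨m, fun h h' hc => hm h h' hc⟩

lemma mem_P (D : KRData P K R) {x y : X} (h : R x y) : x ∈ P := (D.dom x).1 ⟨y, h⟩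
lemma mem_K (D : KRData P K R) {x y : X} (h : R x y) : y ∈ K := (D.ran y).1 ⟨x, h⟩

end KRData

/-- uniform continuity of a continuous function on a compact subset of `ℕ → ℕ`. -/
lemma unif_cont {P : Set X} (hP : IsCompact P) (g : ↥P → X) (hg : Continuous g) (n : ℕ) :
    ∃ m, ∀ p q : ↥P, ↑q ∈ cylinder (p : X) m → g q ∈ cylinder (g p) n := by
  classical
  -- local moduli
  have H : ∀ p : ↥P, ∃ m, ∀ q : ↥P, ↑q ∈ cylinder (p : X) m → g q ∈ cylinder (g p) n := by
    intro p
    have h2 : g ⁻¹' cylinder (g p) n ∈ 𝓝 p :=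
      hg.continuousAt.preimage_mem_nhds (cylinder_mem_nhds (g p) n)
    rw [nhds_subtype_eq_comap] at h2
    obtain ⟨s, hs, hsub⟩ := h2
    obtain ⟨m, hm⟩ := exists_cylinder_subset hs
    exact ⟨m, fun q hq => hsub (hm hq)⟩
  choose mm hmm using H
  set m' : X → ℕ := fun x => if h : x ∈ P then mm ⟨x, h⟩ else 0 with hm'
  obtain ⟨t, htP, htcov⟩ := hP.elim_nhds_subcover (fun x => cylinder x (m' x))
    (fun x _ => cylinder_mem_nhds x (m' x))
  refine ⟨t.sup m', fun p q hq => ?_⟩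
  obtain ⟨x, hxt, hpx⟩ := Set.mem_iUnion₂.1 (htcov p.2)
  have hxP : x ∈ P := htP x hxt
  set px : ↥P := ⟨x, hxP⟩
  have hmx : m' x = mm px := by simp only [hm']; rw [dif_pos hxP]
  have hq' : ↑q ∈ cylinder x (m' x) := by
    refine agree_trans hpx ?_
    exact PiNat.cylinder_anti _ ((Finset.le_sup hxt : m' x ≤ t.sup m')) hq
  have h1 : g p ∈ cylinder (g px) n := hmm px p (by rw [← hmx]; exact hpx)
  have h2 : g q ∈ cylinder (g px) n := hmm px q (by rw [← hmx]; exact hq')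
  rw [PiNat.mem_cylinder_comm] at h1
  exact agree_trans h1 h2

/-! ### The core refinement lemma -/

/-- A matched pair of clopen sets whose trace on `P` is nonempty can be refined into
countably many matched pairs with small trace pieces. -/
lemma refine_piece {P K : Set X} {R : X → X → Prop} (D : KRData P K R)
    {U V : Set X} (hU : IsClopen U) (hV : IsClopen V)
    (hmatch : ∀ x y, R x y → (x ∈ U ↔ y ∈ V)) (hPU : (U ∩ P).Nonempty) (n : ℕ) :
    ∃ w : ℕ → Set X × Set X,
      (Pairwise fun i j => Disjoint (w i).1 (w j).1) ∧
      (Pairwise fun i j => Disjoint (w i).2 (w j).2) ∧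
      (⋃ i, (w i).1) = U ∧ (⋃ i, (w i).2) = V ∧
      (∀ i, IsClopen (w i).1 ∧ IsClopen (w i).2) ∧
      (∀ i, (w i).1.Nonempty ↔ (w i).2.Nonempty) ∧
      (∀ i x y, R x y → (x ∈ (w i).1 ↔ y ∈ (w i).2)) ∧
      (∀ i, ((w i).1 ∩ P).Nonempty →
        (∃ z, (w i).1 ⊆ cylinder z n) ∧ (∃ z, (w i).2 ⊆ cylinder z n)) := by
  classical
  set A := U ∩ P with hA
  set B := V ∩ K with hB
  have hAcomp : IsCompact A := D.compP.inter_left hU.1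
  have hBcomp : IsCompact B := D.compK.inter_left hV.1
  have hUne : U.Nonempty := ⟨hPU.choose, hPU.choose_spec.1⟩
  have hVne : V.Nonempty := by
    obtain ⟨x, hxU, hxP⟩ := hPU
    obtain ⟨y, hy⟩ := (D.dom x).2 hxP
    exact ⟨y, (hmatch x y hy).1 hxU⟩
  -- uniform continuity at level n
  obtain ⟨m₁, hm₁⟩ := D.cont n
  -- reserved cylinder in U missing P
  obtain ⟨c, hcU, hcP⟩ := exists_mem_not_mem_compact hU.2 hUne D.compP
  obtain ⟨k₁, hk₁⟩ := exists_cylinder_disjoint D.compP hcP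
  obtain ⟨k₂, hk₂⟩ := exists_cylinder_subset (hU.2.mem_nhds hcU)
  set mC := max k₁ k₂ with hmC
  set C := cylinder c mC with hC
  have hCU : C ⊆ U := Subset.trans (PiNat.cylinder_anti _ (le_max_right _ _)) hk₂
  have hCP : C ∩ P = ∅ := by
    rw [Set.eq_empty_iff_forall_notMem]
    rintro y ⟨h1, h2⟩
    have : y ∈ cylinder c k₁ := PiNat.cylinder_anti _ (le_max_left _ _) h1
    rw [Set.eq_empty_iff_forall_notMem] at hk₁
    exact hk₁ y ⟨this, h2⟩
  -- uniform openness on the left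
  obtain ⟨mo, hmo⟩ := exists_uniform_cylinder_subset hAcomp hU.2 Set.inter_subset_left
  set m := max (max n m₁) (max mC mo) with hm
  have hmn : n ≤ m := le_trans (le_max_left _ _) (le_max_left _ _)
  have hmm₁ : m₁ ≤ m := le_trans (le_max_right _ _) (le_max_left _ _)
  have hmmC : mC ≤ m := le_trans (le_max_left _ _) (le_max_right _ _)
  have hmmo : mo ≤ m := le_trans (le_max_right _ _) (le_max_right _ _)
  -- left pieces
  set pc : (Fin m → ℕ) → Set X := fun e => res' m ⁻¹' {e} with hpc
  set E : Set (Fin m → ℕ) := res' m '' A with hE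
  have hEfin : E.Finite := (hAcomp.image (continuous_res' m)).finite_of_discrete
  have hpcL : ∀ e ∈ E, pc e ⊆ U := by
    rintro e ⟨z, hzA, rfl⟩ x hx
    have : x ∈ cylinder z m := by
      rw [mem_cylinder_iff']; exact hx
    exact hmo z hzA (PiNat.cylinder_anti _ hmmo this)
  have hCpc : ∀ e ∈ E, C ∩ pc e = ∅ := by
    rintro e ⟨z, hzA, rfl⟩
    rw [Set.eq_empty_iff_forall_notMem]
    rintro t ⟨htC, htp⟩
    have hzt : z ∈ cylinder t m := by rw [mem_cylinder_iff']; exact htp.symm ▸ rfl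
    have hztC : z ∈ cylinder t mC := PiNat.cylinder_anti _ hmmC hzt
    have : z ∈ C := agree_trans htC hztC
    rw [Set.eq_empty_iff_forall_notMem] at hCP
    exact hCP z ⟨this, hzA.2⟩
  -- the right side
  obtain ⟨m₂, hm₂⟩ := D.cont' m
  obtain ⟨c', hcV, hcK⟩ := exists_mem_not_mem_compact hV.2 hVne D.compK
  obtain ⟨k₁', hk₁'⟩ := exists_cylinder_disjoint D.compK hcK
  obtain ⟨k₂', hk₂'⟩ := exists_cylinder_subset (hV.2.mem_nhds hcV)
  set mC' := max k₁' k₂' with hmC'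
  set C' := cylinder c' mC' with hC'
  have hCV : C' ⊆ V := Subset.trans (PiNat.cylinder_anti _ (le_max_right _ _)) hk₂'
  have hCK : C' ∩ K = ∅ := by
    rw [Set.eq_empty_iff_forall_notMem]
    rintro y ⟨h1, h2⟩
    have : y ∈ cylinder c' k₁' := PiNat.cylinder_anti _ (le_max_left _ _) h1
    rw [Set.eq_empty_iff_forall_notMem] at hk₁'
    exact hk₁' y ⟨this, h2⟩
  obtain ⟨mo', hmo'⟩ := exists_uniform_cylinder_subset hBcomp hV.2 Set.inter_subset_left
  set m' := max (max n m₂) (max mC' mo') with hm'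
  have hm'n : n ≤ m' := le_trans (le_max_left _ _) (le_max_left _ _)
  have hm'm₂ : m₂ ≤ m' := le_trans (le_max_right _ _) (le_max_left _ _)
  have hm'mC' : mC' ≤ m' := le_trans (le_max_left _ _) (le_max_right _ _)
  have hm'mo' : mo' ≤ m' := le_trans (le_max_right _ _) (le_max_right _ _)
  set Bs : (Fin m → ℕ) → Set X := fun e => {y | ∃ x, R x y ∧ x ∈ A ∩ pc e} with hBs
  set Vt : (Fin m → ℕ) → Set X := fun e => res' m' ⁻¹' (res' m' '' Bs e) with hVt
  have hBsB : ∀ e, Bs e ⊆ B := by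
    rintro e y ⟨x, hr, hxA, _⟩
    exact ⟨(hmatch x y hr).1 hxA.1, D.mem_K hr⟩
  have hBsVt : ∀ e, Bs e ⊆ Vt e := fun e y hy => ⟨y, hy, rfl⟩
  have hVtcyl : ∀ e, ∀ y ∈ Vt e, ∃ b ∈ Bs e, y ∈ cylinder b m' := by
    rintro e y ⟨b, hb, hres⟩
    exact ⟨b, hb, mem_cylinder_iff'.2 hres.symm⟩
  have hVtV : ∀ e, Vt e ⊆ V := by
    intro e y hy
    obtain ⟨b, hb, hcyl⟩ := hVtcyl e y hy
    exact hmo' b (hBsB e hb) (PiNat.cylinder_anti _ hm'mo' hcyl)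
  -- trace identification on the right
  have hVtK : ∀ e, Vt e ∩ K ⊆ Bs e := by
    rintro e y ⟨hyVt, hyK⟩
    obtain ⟨b, hb, hcyl⟩ := hVtcyl e y hyVt
    obtain ⟨xb, hxb, hxbA⟩ : ∃ x, R x b ∧ x ∈ A ∩ pc e := hb
    obtain ⟨xy, hxy⟩ := (D.ran y).2 hyK
    have hym₂ : y ∈ cylinder b m₂ := PiNat.cylinder_anti _ hm'm₂ hcyl
    have hxyx : xy ∈ cylinder xb m := hm₂ hxb hxy hym₂
    have hxypc : xy ∈ pc e := by
      have h1 : res' m xy = res' m xb := mem_cylinder_iff'.1 hxyx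
      have h2 : res' m xb = e := hxbA.2
      simp only [hpc, Set.mem_preimage, Set.mem_singleton_iff]
      rw [h1, h2]
    have hxyU : xy ∈ U := (hmatch xy y hxy).2 (hVtV e hyVt)
    exact ⟨xy, hxy, ⟨⟨hxyU, D.mem_P hxy⟩, hxypc⟩⟩
  -- matching of the new pieces
  have hmatch' : ∀ e ∈ E, ∀ x y, R x y → (x ∈ pc e ↔ y ∈ Vt e) := by
    intro e he x y hr
    constructor
    · intro hx
      exact hBsVt e ⟨x, hr, ⟨⟨hpcL e he hx, D.mem_P hr⟩, hx⟩⟩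
    · intro hy
      obtain ⟨x', hx', hA'⟩ : ∃ x', R x' y ∧ x' ∈ A ∩ pc e := hVtK e ⟨hy, D.mem_K hr⟩
      rw [D.inj hr hx']
      exact hA'.2
  -- disjointness on the right
  have hVtdisj : ∀ e e', e ≠ e' → Vt e ∩ Vt e' = ∅ := by
    intro e e' hne'
    rw [Set.eq_empty_iff_forall_notMem]
    rintro y ⟨h1, h2⟩
    obtain ⟨b, hb, hc1⟩ := hVtcyl e y h1
    obtain ⟨b', hb', hc2⟩ := hVtcyl e' y h2
    obtain ⟨xb, hxb, hxbA⟩ := hb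
    obtain ⟨xb', hxb', hxbA'⟩ := hb'
    have hbb' : b' ∈ cylinder b m₂ := by
      have h3 : b' ∈ cylinder y m' := by rwa [PiNat.mem_cylinder_comm] at hc2
      have h4 : b' ∈ cylinder b m' := agree_trans hc1 h3
      exact PiNat.cylinder_anti _ hm'm₂ h4
    have : xb' ∈ cylinder xb m := hm₂ hxb hxb' hbb'
    have hres : res' m xb' = res' m xb := mem_cylinder_iff'.1 this
    apply hne'
    rw [← hxbA.2, ← hxbA'.2, hres]
  -- smallness on the right
  have hVtsmall : ∀ e, (Bs e).Nonempty → ∃ z, Vt e ⊆ cylinder z n := by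
    rintro e ⟨b₀, hb₀⟩
    refine ⟨b₀, fun y hy => ?_⟩
    obtain ⟨b, hb, hcyl⟩ := hVtcyl e y hy
    obtain ⟨xb, hxb, hxbA⟩ := hb
    obtain ⟨xb₀, hxb₀, hxb₀A⟩ := hb₀
    have hxx : xb ∈ cylinder xb₀ m := by
      rw [mem_cylinder_iff', hxbA.2, hxb₀A.2]
    have hbn : b ∈ cylinder b₀ n := hm₁ hxb₀ hxb (PiNat.cylinder_anti _ hmm₁ hxx)
    exact agree_trans hbn (PiNat.cylinder_anti _ hm'n hcyl)
  -- reserved cylinder on the right misses all Vt e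
  have hCVt : ∀ e, C' ∩ Vt e = ∅ := by
    intro e
    rw [Set.eq_empty_iff_forall_notMem]
    rintro y ⟨h1, h2⟩
    obtain ⟨b, hb, hcyl⟩ := hVtcyl e y h2
    have hbC : b ∈ C' := by
      have h3 : b ∈ cylinder y m' := by rwa [PiNat.mem_cylinder_comm] at hcyl
      exact agree_trans h1 (PiNat.cylinder_anti _ hm'mC' h3)
    rw [Set.eq_empty_iff_forall_notMem] at hCK
    exact hCK b ⟨hbC, (hBsB e hb).2⟩
  -- nonemptiness of new pieces
  have hpcne : ∀ e ∈ E, (pc e).Nonempty := by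
    rintro e ⟨z, hz, rfl⟩; exact ⟨z, rfl⟩
  have hBsne : ∀ e ∈ E, (Bs e).Nonempty := by
    rintro e ⟨z, hz, rfl⟩
    obtain ⟨y, hy⟩ := (D.dom z).2 hz.2
    exact ⟨y, z, hy, hz, rfl⟩
  -- the leftovers
  set U₀ := U \ (res' m ⁻¹' E) with hU₀
  set V₀ := V \ (⋃ e ∈ hEfin.toFinset, Vt e) with hV₀
  have hUpc : ∀ x, x ∈ res' m ⁻¹' E ↔ ∃ e ∈ E, x ∈ pc e := by
    intro x
    constructor
    · intro hx; exact ⟨res' m x, hx, rfl⟩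
    · rintro ⟨e, he, hx⟩
      simp only [hpc, Set.mem_preimage, Set.mem_singleton_iff] at hx
      simp only [Set.mem_preimage]
      rwa [hx]
  have hU₀clopen : IsClopen U₀ := hU.diff (isClopen_preimage_res' m E)
  have hV₀clopen : IsClopen V₀ := by
    apply hV.diff
    apply isClopen_biUnion_finset
    intro e _
    exact isClopen_preimage_res' m' _
  have hU₀P : U₀ ∩ P = ∅ := by
    rw [Set.eq_empty_iff_forall_notMem]
    rintro x ⟨⟨hxU, hxE⟩, hxP⟩
    exact hxE ⟨x, ⟨hxU, hxP⟩, rfl⟩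
  have hV₀K : V₀ ∩ K = ∅ := by
    rw [Set.eq_empty_iff_forall_notMem]
    rintro y ⟨⟨hyV, hyVt⟩, hyK⟩
    obtain ⟨x, hx⟩ := (D.ran y).2 hyK
    apply hyVt
    have hxA : x ∈ A := ⟨(hmatch x y hx).2 hyV, D.mem_P hx⟩
    have : y ∈ Vt (res' m x) := hBsVt _ ⟨x, hx, hxA, rfl⟩
    exact Set.mem_biUnion (hEfin.mem_toFinset.2 ⟨x, hxA, rfl⟩) this
  have hU₀ne : U₀.Nonempty := by
    refine ⟨c, hCU (self_mem_cylinder _ _), fun hc => ?_⟩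
    obtain ⟨e, he, hce⟩ := (hUpc c).1 hc
    have := hCpc e he
    rw [Set.eq_empty_iff_forall_notMem] at this
    exact this c ⟨self_mem_cylinder _ _, hce⟩
  have hV₀ne : V₀.Nonempty := by
    refine ⟨c', hCV (self_mem_cylinder _ _), fun hc => ?_⟩
    obtain ⟨e, -, hce⟩ := Set.mem_iUnion₂.1 hc
    have := hCVt e
    rw [Set.eq_empty_iff_forall_notMem] at this
    exact this c' ⟨self_mem_cylinder _ _, hce⟩
  have hmatch₀ : ∀ x y, R x y → (x ∈ U₀ ↔ y ∈ V₀) := by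
    intro x y hr
    constructor
    · intro hx
      exfalso
      rw [Set.eq_empty_iff_forall_notMem] at hU₀P
      exact hU₀P x ⟨hx, D.mem_P hr⟩
    · intro hy
      exfalso
      rw [Set.eq_empty_iff_forall_notMem] at hV₀K
      exact hV₀K y ⟨hy, D.mem_K hr⟩
  -- enumerate E
  set L := hEfin.toFinset.toList with hL
  have hLnd : L.Nodup := Finset.nodup_toList _
  have hLE : ∀ e, e ∈ L ↔ e ∈ E := by
    intro e; rw [hL, Finset.mem_toList, Set.Finite.mem_toFinset]
  -- the refined family
  set w : ℕ → Set X × Set X := fun i =>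
    match i with
    | 0 => (U₀, V₀)
    | i + 1 => if h : i < L.length then (pc (L.get ⟨i, h⟩), Vt (L.get ⟨i, h⟩)) else (∅, ∅)
    with hw
  have hw0 : w 0 = (U₀, V₀) := rfl
  have hwsucc : ∀ i (h : i < L.length), w (i + 1) = (pc (L.get ⟨i, h⟩), Vt (L.get ⟨i, h⟩)) := by
    intro i h; simp only [hw, dif_pos h]
  have hwsucc' : ∀ i, ¬ (i < L.length) → w (i + 1) = (∅, ∅) := by
    intro i h; simp only [hw, dif_neg h]
  have hgetE : ∀ i (h : i < L.length), L.get ⟨i, h⟩ ∈ E := fun i h =>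
    (hLE _).1 (L.get_mem _)
  have hgetne : ∀ i j (hi : i < L.length) (hj : j < L.length), i ≠ j →
      L.get ⟨i, hi⟩ ≠ L.get ⟨j, hj⟩ := by
    intro i j hi hj hij h
    have h2 : (⟨i, hi⟩ : Fin L.length) = ⟨j, hj⟩ := (List.Nodup.get_inj_iff hLnd).1 h
    exact hij (congrArg Fin.val h2)
  refine ⟨w, ?_, ?_, ?_, ?_, ?_, ?_, ?_, ?_⟩
  · -- disjoint firsts
    intro i j hij
    rw [Set.disjoint_left]
    rcases i with _ | i
    · rcases j with _ | j
      · exact absurd rfl hij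
      · intro x hx hx'
        by_cases h : j < L.length
        · rw [hwsucc j h] at hx'
          exact hx.2 ((hUpc x).2 ⟨_, hgetE j h, hx'⟩)
        · rw [hwsucc' j h] at hx'; exact hx'
    · rcases j with _ | j
      · intro x hx hx'
        by_cases h : i < L.length
        · rw [hwsucc i h] at hx
          exact hx'.2 ((hUpc x).2 ⟨_, hgetE i h, hx⟩)
        · rw [hwsucc' i h] at hx; exact hx
      · intro x hx hx'
        by_cases h : i < L.length
        · by_cases h' : j < L.length
          · rw [hwsucc i h] at hx
            rw [hwsucc j h'] at hx'
            have hne2 : L.get ⟨i, h⟩ ≠ L.get ⟨j, h'⟩ := hgetne i j h h' (by omega)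
            simp only [hpc, Set.mem_preimage, Set.mem_singleton_iff] at hx hx'
            exact hne2 (hx ▸ hx' ▸ rfl)
          · rw [hwsucc' j h'] at hx'; exact hx'
        · rw [hwsucc' i h] at hx; exact hx
  · -- disjoint seconds
    intro i j hij
    rw [Set.disjoint_left]
    rcases i with _ | i
    · rcases j with _ | j
      · exact absurd rfl hij
      · intro y hy hy'
        by_cases h : j < L.length
        · rw [hwsucc j h] at hy'
          exact hy.2 (Set.mem_biUnion (hEfin.mem_toFinset.2 (hgetE j h)) hy')
        · rw [hwsucc' j h] at hy'; exact hy'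
    · rcases j with _ | j
      · intro y hy hy'
        by_cases h : i < L.length
        · rw [hwsucc i h] at hy
          exact hy'.2 (Set.mem_biUnion (hEfin.mem_toFinset.2 (hgetE i h)) hy)
        · rw [hwsucc' i h] at hy; exact hy
      · intro y hy hy'
        by_cases h : i < L.length
        · by_cases h' : j < L.length
          · rw [hwsucc i h] at hy
            rw [hwsucc j h'] at hy'
            have hd := hVtdisj _ _ (hgetne i j h h' (by omega))
            rw [Set.eq_empty_iff_forall_notMem] at hd
            exact hd y ⟨hy, hy'⟩
          · rw [hwsucc' j h'] at hy'; exact hy'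
        · rw [hwsucc' i h] at hy; exact hy
  · -- union of firsts
    apply Set.Subset.antisymm
    · rintro x ⟨s, ⟨i, rfl⟩, hx⟩
      beta_reduce at hx
      rcases i with _ | i
      · exact hx.1
      · by_cases h : i < L.length
        · rw [hwsucc i h] at hx
          exact hpcL _ (hgetE i h) hx
        · rw [hwsucc' i h] at hx; exact absurd hx (Set.notMem_empty x)
    · intro x hxU
      by_cases hx : x ∈ res' m ⁻¹' E
      · obtain ⟨e, he, hxe⟩ := (hUpc x).1 hx
        obtain ⟨i, hi⟩ := List.get_of_mem ((hLE e).2 he)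
        refine Set.mem_iUnion.2 ⟨i.1 + 1, ?_⟩
        rw [hwsucc i.1 i.2]
        have hLi : L.get ⟨i.1, i.2⟩ = e := by rw [← hi]
        rw [hLi]
        exact hxe
      · exact Set.mem_iUnion.2 ⟨0, ⟨hxU, hx⟩⟩
  · -- union of seconds
    apply Set.Subset.antisymm
    · rintro y ⟨s, ⟨i, rfl⟩, hy⟩
      beta_reduce at hy
      rcases i with _ | i
      · exact hy.1
      · by_cases h : i < L.length
        · rw [hwsucc i h] at hy
          exact hVtV _ hy
        · rw [hwsucc' i h] at hy; exact absurd hy (Set.notMem_empty y)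
    · intro y hyV
      by_cases hy : y ∈ ⋃ e ∈ hEfin.toFinset, Vt e
      · obtain ⟨e, he, hye⟩ := Set.mem_iUnion₂.1 hy
        have heE : e ∈ E := hEfin.mem_toFinset.1 he
        obtain ⟨i, hi⟩ := List.get_of_mem ((hLE e).2 heE)
        refine Set.mem_iUnion.2 ⟨i.1 + 1, ?_⟩
        rw [hwsucc i.1 i.2]
        have hLi : L.get ⟨i.1, i.2⟩ = e := by rw [← hi]
        rw [hLi]
        exact hye
      · exact Set.mem_iUnion.2 ⟨0, ⟨hyV, hy⟩⟩
  · -- clopen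
    intro i
    rcases i with _ | i
    · exact ⟨hU₀clopen, hV₀clopen⟩
    · by_cases h : i < L.length
      · rw [hwsucc i h]
        exact ⟨isClopen_preimage_res' m _, isClopen_preimage_res' m' _⟩
      · rw [hwsucc' i h]
        exact ⟨isClopen_empty, isClopen_empty⟩
  · -- nonemptiness iff
    intro i
    rcases i with _ | i
    · exact ⟨fun _ => hV₀ne, fun _ => hU₀ne⟩
    · by_cases h : i < L.length
      · rw [hwsucc i h]
        constructor
        · intro _
          exact ((hBsne _ (hgetE i h)).mono (hBsVt _))
        · intro _
          exact hpcne _ (hgetE i h)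
      · rw [hwsucc' i h]
  · -- matching
    intro i x y hr
    rcases i with _ | i
    · exact hmatch₀ x y hr
    · by_cases h : i < L.length
      · rw [hwsucc i h]
        exact hmatch' _ (hgetE i h) x y hr
      · rw [hwsucc' i h]
        exact Iff.rfl
  · -- smallness
    intro i hi
    rcases i with _ | i
    · exfalso
      rw [Set.eq_empty_iff_forall_notMem] at hU₀P
      obtain ⟨x, hx⟩ := hi
      exact hU₀P x hx
    · by_cases h : i < L.length
      · rw [hwsucc i h]
        constructor
        · obtain ⟨z, hz⟩ := hpcne _ (hgetE i h)
          refine ⟨z, fun x hx => ?_⟩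
          apply PiNat.cylinder_anti _ hmn
          rw [mem_cylinder_iff']
          simp only [hpc, Set.mem_preimage, Set.mem_singleton_iff] at hx hz
          rw [hx, hz]
        · obtain ⟨z, hz⟩ := hVtsmall _ (hBsne _ (hgetE i h))
          exact ⟨z, hz⟩
      · rw [hwsucc' i h] at hi
        exact absurd hi (by simp)

/-! ### Stages and schemes -/

/-- A stage: matched clopen partitions of the whole space. -/
structure KRStage (P K : Set X) (R : X → X → Prop) (n : ℕ) where
  U : ℕ → Set X
  V : ℕ → Set X
  disjU : Pairwise fun i j => Disjoint (U i) (U j)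
  disjV : Pairwise fun i j => Disjoint (V i) (V j)
  covU : (⋃ i, U i) = Set.univ
  covV : (⋃ i, V i) = Set.univ
  clopen : ∀ i, IsClopen (U i) ∧ IsClopen (V i)
  nonemp : ∀ i, (U i).Nonempty ↔ (V i).Nonempty
  matched : ∀ i x y, R x y → (x ∈ U i ↔ y ∈ V i)
  small : ∀ i, ((U i) ∩ P).Nonempty →
    (∃ z, U i ⊆ cylinder z n) ∧ (∃ z, V i ⊆ cylinder z n)

namespace KRStage

variable {P K : Set X} {R : X → X → Prop} {n : ℕ}

lemma trace_ne (D : KRData P K R) (S : KRStage P K R n) (i : ℕ) :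
    ((S.U i) ∩ P).Nonempty ↔ ((S.V i) ∩ K).Nonempty := by
  constructor
  · rintro ⟨x, hxU, hxP⟩
    obtain ⟨y, hy⟩ := (D.dom x).2 hxP
    exact ⟨y, (S.matched i x y hy).1 hxU, D.mem_K hy⟩
  · rintro ⟨y, hyV, hyK⟩
    obtain ⟨x, hx⟩ := (D.ran y).2 hyK
    exact ⟨x, (S.matched i x y hx).2 hyV, D.mem_P hx⟩

/-- swap the roles of the two sides -/
def swap (D : KRData P K R) (S : KRStage P K R n) : KRStage K P (flip R) n where
  U := S.V
  V := S.U
  disjU := S.disjV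
  disjV := S.disjU
  covU := S.covV
  covV := S.covU
  clopen := fun i => ⟨(S.clopen i).2, (S.clopen i).1⟩
  nonemp := fun i => (S.nonemp i).symm
  matched := fun i x y h => (S.matched i y x h).symm
  small := fun i h => ((S.small i ((S.trace_ne D i).2 h)).symm)

end KRStage

/-- one refinement step applied to a whole stage -/
lemma stage_step {P K : Set X} {R : X → X → Prop} (D : KRData P K R) (n : ℕ)
    (S : KRStage P K R n) :
    ∃ T : KRStage P K R (n + 1),
      (∀ i, ∃ j, T.U i ⊆ S.U j ∧ T.V i ⊆ S.V j) ∧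
      (∀ i, S.U i ∩ P = ∅ → ∃ j, T.U j = S.U i ∧ T.V j = S.V i) := by
  classical
  -- for each piece get a refinement family
  have H : ∀ i, ∃ w : ℕ → Set X × Set X,
      ((Pairwise fun a b => Disjoint (w a).1 (w b).1) ∧
      (Pairwise fun a b => Disjoint (w a).2 (w b).2) ∧
      (⋃ a, (w a).1) = S.U i ∧ (⋃ a, (w a).2) = S.V i ∧
      (∀ a, IsClopen (w a).1 ∧ IsClopen (w a).2) ∧
      (∀ a, (w a).1.Nonempty ↔ (w a).2.Nonempty) ∧
      (∀ a x y, R x y → (x ∈ (w a).1 ↔ y ∈ (w a).2)) ∧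
      (∀ a, ((w a).1 ∩ P).Nonempty →
        (∃ z, (w a).1 ⊆ cylinder z (n+1)) ∧ (∃ z, (w a).2 ⊆ cylinder z (n+1)))) ∧
      (S.U i ∩ P = ∅ → w 0 = (S.U i, S.V i)) := by
    intro i
    by_cases h : (S.U i ∩ P).Nonempty
    · obtain ⟨w, h1, h2, h3, h4, h5, h6, h7, h8⟩ :=
        refine_piece D (S.clopen i).1 (S.clopen i).2 (S.matched i) h (n + 1)
      refine ⟨w, ⟨h1, h2, h3, h4, h5, h6, h7, h8⟩, fun hemp => ?_⟩
      rw [hemp] at h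
      exact absurd h (by simp [Set.not_nonempty_empty])
    · -- keep the piece
      have hemp : S.U i ∩ P = ∅ := Set.not_nonempty_iff_eq_empty.1 h
      refine ⟨fun a => if a = 0 then (S.U i, S.V i) else (∅, ∅), ?_, fun _ => by simp⟩
      have hval : ∀ a, (if a = 0 then (S.U i, S.V i) else ((∅ : Set X), (∅ : Set X)))
          = if a = 0 then (S.U i, S.V i) else (∅, ∅) := fun a => rfl
      refine ⟨?_, ?_, ?_, ?_, ?_, ?_, ?_, ?_⟩
      · intro a b hab
        beta_reduce
        rcases eq_or_ne a 0 with rfl | ha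
        · rw [if_neg hab.symm]
          simp
        · rw [if_neg ha]
          simp
      · intro a b hab
        beta_reduce
        rcases eq_or_ne a 0 with rfl | ha
        · rw [if_neg hab.symm]
          simp
        · rw [if_neg ha]
          simp
      · apply Set.Subset.antisymm
        · rintro x ⟨s, ⟨a, rfl⟩, hx⟩
          beta_reduce at hx
          rcases eq_or_ne a 0 with rfl | ha
          · rw [if_pos rfl] at hx; exact hx
          · rw [if_neg ha] at hx; exact absurd hx (Set.notMem_empty x)
        · intro x hx
          exact Set.mem_iUnion.2 ⟨0, by beta_reduce; rw [if_pos rfl]; exact hx⟩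
      · apply Set.Subset.antisymm
        · rintro y ⟨s, ⟨a, rfl⟩, hy⟩
          beta_reduce at hy
          rcases eq_or_ne a 0 with rfl | ha
          · rw [if_pos rfl] at hy; exact hy
          · rw [if_neg ha] at hy; exact absurd hy (Set.notMem_empty y)
        · intro y hy
          exact Set.mem_iUnion.2 ⟨0, by beta_reduce; rw [if_pos rfl]; exact hy⟩
      · intro a
        beta_reduce
        rcases eq_or_ne a 0 with rfl | ha
        · rw [if_pos rfl]; exact S.clopen i
        · rw [if_neg ha]; exact ⟨isClopen_empty, isClopen_empty⟩
      · intro a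
        beta_reduce
        rcases eq_or_ne a 0 with rfl | ha
        · rw [if_pos rfl]; exact S.nonemp i
        · rw [if_neg ha]
      · intro a x y hr
        beta_reduce
        rcases eq_or_ne a 0 with rfl | ha
        · rw [if_pos rfl]; exact S.matched i x y hr
        · rw [if_neg ha]; exact Iff.rfl
      · intro a hne
        beta_reduce at hne ⊢
        rcases eq_or_ne a 0 with rfl | ha
        · rw [if_pos rfl] at hne
          rw [hemp] at hne
          exact absurd hne (by simp [Set.not_nonempty_empty])
        · rw [if_neg ha] at hne
          exact absurd hne (by simp [Set.not_nonempty_empty])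
  choose w hw hkeep using H
  have hd1 := fun i => (hw i).1
  have hd2 := fun i => (hw i).2.1
  have hun1 := fun i => (hw i).2.2.1
  have hun2 := fun i => (hw i).2.2.2.1
  have hcl := fun i => (hw i).2.2.2.2.1
  have hnee := fun i => (hw i).2.2.2.2.2.1
  have hmt := fun i => (hw i).2.2.2.2.2.2.1
  have hsm := fun i => (hw i).2.2.2.2.2.2.2
  set q : ℕ × ℕ ≃ ℕ := Denumerable.eqv (ℕ × ℕ) with hq
  have hsubU : ∀ i a, (w i a).1 ⊆ S.U i := fun i a => by
    rw [← hun1 i]; exact Set.subset_iUnion (fun a => (w i a).1) a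
  have hsubV : ∀ i a, (w i a).2 ⊆ S.V i := fun i a => by
    rw [← hun2 i]; exact Set.subset_iUnion (fun a => (w i a).2) a
  refine ⟨⟨fun k => (w (q.symm k).1 (q.symm k).2).1,
          fun k => (w (q.symm k).1 (q.symm k).2).2, ?_, ?_, ?_, ?_, ?_, ?_, ?_, ?_⟩,
          ?_, ?_⟩
  · intro k k' hkk
    beta_reduce
    have hne : q.symm k ≠ q.symm k' := fun h => hkk (by
      have := congrArg q h; simpa using this)
    rcases eq_or_ne (q.symm k).1 (q.symm k').1 with h1 | h1
    · have h2 : (q.symm k).2 ≠ (q.symm k').2 := fun h2 => hne (Prod.ext h1 h2)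
      rw [h1]
      exact hd1 (q.symm k').1 h2
    · exact Set.disjoint_of_subset (hsubU _ _) (hsubU _ _) (S.disjU h1)
  · intro k k' hkk
    beta_reduce
    have hne : q.symm k ≠ q.symm k' := fun h => hkk (by
      have := congrArg q h; simpa using this)
    rcases eq_or_ne (q.symm k).1 (q.symm k').1 with h1 | h1
    · have h2 : (q.symm k).2 ≠ (q.symm k').2 := fun h2 => hne (Prod.ext h1 h2)
      rw [h1]
      exact hd2 (q.symm k').1 h2
    · exact Set.disjoint_of_subset (hsubV _ _) (hsubV _ _) (S.disjV h1)
  · apply Set.Subset.antisymm (Set.subset_univ _)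
    intro x _
    have hx : x ∈ ⋃ i, S.U i := by rw [S.covU]; exact Set.mem_univ x
    obtain ⟨s, ⟨i, rfl⟩, hxi⟩ := hx
    beta_reduce at hxi
    rw [← hun1 i] at hxi
    obtain ⟨s, ⟨a, rfl⟩, hxa⟩ := hxi
    beta_reduce at hxa
    refine Set.mem_iUnion.2 ⟨q (i, a), ?_⟩
    simp only [Equiv.symm_apply_apply]
    exact hxa
  · apply Set.Subset.antisymm (Set.subset_univ _)
    intro y _
    have hy : y ∈ ⋃ i, S.V i := by rw [S.covV]; exact Set.mem_univ y
    obtain ⟨s, ⟨i, rfl⟩, hyi⟩ := hy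
    beta_reduce at hyi
    rw [← hun2 i] at hyi
    obtain ⟨s, ⟨a, rfl⟩, hya⟩ := hyi
    beta_reduce at hya
    refine Set.mem_iUnion.2 ⟨q (i, a), ?_⟩
    simp only [Equiv.symm_apply_apply]
    exact hya
  · intro k; exact hcl _ _
  · intro k; exact hnee _ _
  · intro k; exact hmt _ _
  · intro k; exact hsm _ _
  · -- refines
    intro k
    exact ⟨(q.symm k).1, hsubU _ _, hsubV _ _⟩
  · -- persists
    intro i hemp
    refine ⟨q (i, 0), ?_, ?_⟩
    · simp only [Equiv.symm_apply_apply]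
      rw [hkeep i hemp]
    · simp only [Equiv.symm_apply_apply]
      rw [hkeep i hemp]

/-- A full scheme of stages. -/
structure KRScheme (P K : Set X) (R : X → X → Prop) where
  S : ∀ n, KRStage P K R n
  refines : ∀ n i, ∃ j, (S (n+1)).U i ⊆ (S n).U j ∧ (S (n+1)).V i ⊆ (S n).V j
  persists : ∀ n i, (S n).U i ∩ P = ∅ →
    ∃ j, (S (n+1)).U j = (S n).U i ∧ (S (n+1)).V j = (S n).V i

namespace KRScheme

variable {P K : Set X} {R : X → X → Prop}

/-- swap the roles in a scheme -/
def swap (D : KRData P K R) (SC : KRScheme P K R) : KRScheme K P (flip R) where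
  S := fun n => (SC.S n).swap D
  refines := fun n i => by
    obtain ⟨j, h1, h2⟩ := SC.refines n i
    exact ⟨j, h2, h1⟩
  persists := fun n i h => by
    have h' : (SC.S n).U i ∩ P = ∅ := by
      rw [← Set.not_nonempty_iff_eq_empty] at h ⊢
      intro hc
      exact h (((SC.S n).trace_ne D i).1 hc)
    obtain ⟨j, h1, h2⟩ := SC.persists n i h'
    exact ⟨j, h2, h1⟩

end KRScheme

/-- existence of a scheme -/
lemma exists_scheme {P K : Set X} {R : X → X → Prop} (D : KRData P K R) :
    Nonempty (KRScheme P K R) := by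
  classical
  -- base stage
  have base : KRStage P K R 0 := by
    refine ⟨fun i => if i = 0 then Set.univ else ∅, fun i => if i = 0 then Set.univ else ∅,
      ?_, ?_, ?_, ?_, ?_, ?_, ?_, ?_⟩
    · intro a b hab
      beta_reduce
      rcases eq_or_ne a 0 with rfl | ha
      · rw [if_neg hab.symm]; simp
      · rw [if_neg ha]; simp
    · intro a b hab
      beta_reduce
      rcases eq_or_ne a 0 with rfl | ha
      · rw [if_neg hab.symm]; simp
      · rw [if_neg ha]; simp
    · apply Set.Subset.antisymm (Set.subset_univ _)
      intro x _
      exact Set.mem_iUnion.2 ⟨0, by beta_reduce; rw [if_pos rfl]; trivial⟩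
    · apply Set.Subset.antisymm (Set.subset_univ _)
      intro x _
      exact Set.mem_iUnion.2 ⟨0, by beta_reduce; rw [if_pos rfl]; trivial⟩
    · intro a
      beta_reduce
      rcases eq_or_ne a 0 with rfl | ha
      · rw [if_pos rfl]; exact ⟨isClopen_univ, isClopen_univ⟩
      · rw [if_neg ha]; exact ⟨isClopen_empty, isClopen_empty⟩
    · intro a
      beta_reduce
      rcases eq_or_ne a 0 with rfl | ha
      · rw [if_pos rfl]
      · rw [if_neg ha]
    · intro a x y hr
      beta_reduce
      rcases eq_or_ne a 0 with rfl | ha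
      · rw [if_pos rfl]; simp
      · rw [if_neg ha]; simp
    · intro a _
      constructor
      · exact ⟨fun k => 0, by rw [PiNat.cylinder_zero]; exact Set.subset_univ _⟩
      · exact ⟨fun k => 0, by rw [PiNat.cylinder_zero]; exact Set.subset_univ _⟩
  have hstep : ∀ n (Sn : KRStage P K R n), ∃ T : KRStage P K R (n + 1),
      (∀ i, ∃ j, T.U i ⊆ Sn.U j ∧ T.V i ⊆ Sn.V j) ∧
      (∀ i, Sn.U i ∩ P = ∅ → ∃ j, T.U j = Sn.U i ∧ T.V j = Sn.V i) :=
    fun n Sn => stage_step D n Sn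
  choose nxt h1 h2 using hstep
  refine ⟨⟨fun n => Nat.rec base nxt n, fun n i => h1 n _ i, fun n i h => h2 n _ i h⟩⟩

/-! ### Selection of pieces, terminal pieces, stability -/

namespace KRScheme

open scoped Classical

variable {P K : Set X} {R : X → X → Prop}

noncomputable def idxAt (SC : KRScheme P K R) (n : ℕ) (x : X) : ℕ :=
  Classical.choose (show ∃ i, x ∈ (SC.S n).U i from
    Set.mem_iUnion.1 (by rw [(SC.S n).covU]; trivial))

lemma mem_pcU (SC : KRScheme P K R) (n : ℕ) (x : X) : x ∈ (SC.S n).U (SC.idxAt n x) :=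
  Classical.choose_spec (show ∃ i, x ∈ (SC.S n).U i from
    Set.mem_iUnion.1 (by rw [(SC.S n).covU]; trivial))

/-- the piece containing `x` at stage `n`, and its partner -/
noncomputable def pcU (SC : KRScheme P K R) (n : ℕ) (x : X) : Set X :=
  (SC.S n).U (SC.idxAt n x)

noncomputable def pcV (SC : KRScheme P K R) (n : ℕ) (x : X) : Set X :=
  (SC.S n).V (SC.idxAt n x)

lemma mem_pcU' (SC : KRScheme P K R) (n : ℕ) (x : X) : x ∈ SC.pcU n x := SC.mem_pcU n x

lemma uniq (SC : KRScheme P K R) {n i : ℕ} {x : X} (h : x ∈ (SC.S n).U i) :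
    (SC.S n).U i = SC.pcU n x ∧ (SC.S n).V i = SC.pcV n x := by
  rcases eq_or_ne i (SC.idxAt n x) with rfl | hne
  · exact ⟨rfl, rfl⟩
  · exfalso
    have hd := (SC.S n).disjU hne
    beta_reduce at hd
    rw [Set.disjoint_left] at hd
    exact hd h (SC.mem_pcU n x)

lemma exists_terminal (SC : KRScheme P K R) (D : KRData P K R) {x : X} (hx : x ∉ P) :
    ∃ n, SC.pcU n x ∩ P = ∅ := by
  obtain ⟨n₀, hn₀⟩ := exists_cylinder_disjoint D.compP hx
  refine ⟨n₀, ?_⟩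
  rw [← Set.not_nonempty_iff_eq_empty]
  intro hne
  obtain ⟨⟨z₀, hz₀⟩, -⟩ := (SC.S n₀).small (SC.idxAt n₀ x) hne
  have hxz : x ∈ cylinder z₀ n₀ := hz₀ (SC.mem_pcU n₀ x)
  have hsub : SC.pcU n₀ x ⊆ cylinder x n₀ := by
    rw [cylinder_eq_of_mem hxz]
    exact hz₀
  obtain ⟨u, huU, huP⟩ := hne
  rw [Set.eq_empty_iff_forall_notMem] at hn₀
  exact hn₀ u ⟨hsub huU, huP⟩

/-- the terminal level of `x ∉ P` (junk value otherwise) -/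
noncomputable def NN (SC : KRScheme P K R) (D : KRData P K R) (x : X) : ℕ :=
  if h : ∃ n, SC.pcU n x ∩ P = ∅ then Nat.find h else 0

lemma NN_spec (SC : KRScheme P K R) (D : KRData P K R) {x : X} (hx : x ∉ P) :
    SC.pcU (SC.NN D x) x ∩ P = ∅ := by
  have h := SC.exists_terminal D hx
  rw [NN, dif_pos h]
  exact Nat.find_spec h

lemma NN_le (SC : KRScheme P K R) (D : KRData P K R) {x : X} (hx : x ∉ P) {n : ℕ}
    (h : SC.pcU n x ∩ P = ∅) : SC.NN D x ≤ n := by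
  have h' := SC.exists_terminal D hx
  rw [NN, dif_pos h']
  exact Nat.find_min' h' h

noncomputable def tU (SC : KRScheme P K R) (D : KRData P K R) (x : X) : Set X :=
  SC.pcU (SC.NN D x) x

noncomputable def tV (SC : KRScheme P K R) (D : KRData P K R) (x : X) : Set X :=
  SC.pcV (SC.NN D x) x

lemma mem_tU (SC : KRScheme P K R) (D : KRData P K R) (x : X) : x ∈ SC.tU D x :=
  SC.mem_pcU _ x

lemma tU_trace (SC : KRScheme P K R) (D : KRData P K R) {x : X} (hx : x ∉ P) :
    SC.tU D x ∩ P = ∅ := SC.NN_spec D hx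

/-- iterated persistence -/
lemma persist_le (SC : KRScheme P K R) {n : ℕ} {i : ℕ} (h : (SC.S n).U i ∩ P = ∅)
    {n' : ℕ} (hnn : n ≤ n') :
    ∃ j, (SC.S n').U j = (SC.S n).U i ∧ (SC.S n').V j = (SC.S n).V i := by
  induction n' , hnn using Nat.le_induction with
  | base => exact ⟨i, rfl, rfl⟩
  | succ n' hnn ih =>
    obtain ⟨j, hj1, hj2⟩ := ih
    have : (SC.S n').U j ∩ P = ∅ := by rw [hj1]; exact h
    obtain ⟨j', hj1', hj2'⟩ := SC.persists n' j this
    exact ⟨j', by rw [hj1', hj1], by rw [hj2', hj2]⟩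

/-- the pieces of a given point form a decreasing chain (in both components) -/
lemma pc_anti (SC : KRScheme P K R) {n n' : ℕ} (hnn : n ≤ n') (x : X) :
    SC.pcU n' x ⊆ SC.pcU n x ∧ SC.pcV n' x ⊆ SC.pcV n x := by
  induction n' , hnn using Nat.le_induction with
  | base => exact ⟨Set.Subset.rfl, Set.Subset.rfl⟩
  | succ n' hnn ih =>
    obtain ⟨j, hj1, hj2⟩ := SC.refines n' (SC.idxAt (n' + 1) x)
    have hxj : x ∈ (SC.S n').U j := hj1 (SC.mem_pcU _ x)
    obtain ⟨he1, he2⟩ := SC.uniq hxj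
    refine ⟨Set.Subset.trans ?_ ih.1, Set.Subset.trans ?_ ih.2⟩
    · rw [← he1]; exact hj1
    · rw [← he2]; exact hj2

/-- stability: points of a terminal piece all have this piece as their terminal piece -/
lemma stab (SC : KRScheme P K R) (D : KRData P K R) {n i : ℕ}
    (hi : (SC.S n).U i ∩ P = ∅) {z : X} (hz : z ∈ (SC.S n).U i) :
    z ∉ P ∧ SC.tU D z = (SC.S n).U i ∧ SC.tV D z = (SC.S n).V i := by
  have hzP : z ∉ P := by
    intro hzP
    rw [Set.eq_empty_iff_forall_notMem] at hi
    exact hi z ⟨hz, hzP⟩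
  obtain ⟨he1, he2⟩ := SC.uniq hz
  have hNle : SC.NN D z ≤ n := SC.NN_le D hzP (by rw [← he1]; exact hi)
  obtain ⟨j, hj1, hj2⟩ := SC.persist_le (SC.tU_trace D hzP) hNle
  have hzj : z ∈ (SC.S n).U j := by rw [hj1]; exact SC.mem_tU D z
  obtain ⟨hf1, hf2⟩ := SC.uniq hzj
  refine ⟨hzP, ?_, ?_⟩
  · rw [show SC.tU D z = (SC.S n).U j from hj1.symm, hf1, ← he1]
  · rw [show SC.tV D z = (SC.S n).V j from hj2.symm, hf2, ← he2]

/-- the continuity lemma at points of `P` -/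
lemma continuousAt_of (SC : KRScheme P K R) (D : KRData P K R) {F : X → X}
    (hF1 : ∀ x y, R x y → F x = y) (hF2 : ∀ x, x ∉ P → F x ∈ SC.tV D x)
    {x y : X} (hR : R x y) : ContinuousAt F x := by
  have hxP : x ∈ P := D.mem_P hR
  have hFx : F x = y := hF1 x y hR
  rw [ContinuousAt, hFx]
  intro s hs
  obtain ⟨n, hn⟩ := exists_cylinder_subset hs
  rw [Filter.mem_map]
  have hyV : y ∈ SC.pcV n x := ((SC.S n).matched (SC.idxAt n x) x y hR).1 (SC.mem_pcU n x)
  have htr : (SC.pcU n x ∩ P).Nonempty := ⟨x, SC.mem_pcU n x, hxP⟩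
  obtain ⟨-, z, hzsmall⟩ := (SC.S n).small (SC.idxAt n x) htr
  have hysmall : SC.pcV n x ⊆ cylinder y n := by
    have : y ∈ cylinder z n := hzsmall hyV
    rw [cylinder_eq_of_mem this]
    exact hzsmall
  apply Filter.mem_of_superset
    (((SC.S n).clopen (SC.idxAt n x)).1.2.mem_nhds (SC.mem_pcU n x))
  intro x' hx'
  rw [Set.mem_preimage]
  obtain ⟨hg1, hg2⟩ := SC.uniq hx'
  by_cases hx'P : x' ∈ P
  · obtain ⟨y', hy'⟩ := (D.dom x').2 hx'P
    have : F x' = y' := hF1 x' y' hy'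
    rw [this]
    have hy'V : y' ∈ SC.pcV n x := ((SC.S n).matched (SC.idxAt n x) x' y' hy').1 hx'
    exact hn (hysmall hy'V)
  · -- terminal level of x' is at least n
    have hnN : n ≤ SC.NN D x' := by
      by_contra hlt
      push_neg at hlt
      obtain ⟨j, hj1, hj2⟩ := SC.persist_le (SC.tU_trace D hx'P) hlt.le
      have hx'j : x' ∈ (SC.S n).U j := by rw [hj1]; exact SC.mem_tU D x'
      obtain ⟨hh1, hh2⟩ := SC.uniq hx'j
      have hjtr : (SC.S n).U j ∩ P = ∅ := by rw [hj1]; exact SC.tU_trace D hx'P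
      rw [Set.eq_empty_iff_forall_notMem] at hjtr
      have hxU : x ∈ (SC.S n).U j := by
        rw [hh1, ← hg1]; exact SC.mem_pcU n x
      exact hjtr x ⟨hxU, hxP⟩
    have hchain := (SC.pc_anti hnN x').2
    have hFx' : F x' ∈ SC.pcV n x' := hchain (hF2 x' hx'P)
    have hVV : SC.pcV n x' = SC.pcV n x := by rw [← hg2]; rfl
    rw [hVV] at hFx'
    exact hn (hysmall hFx')

end KRScheme

/-! ### Assembly of the global homeomorphism -/

/-- choice of transfer maps between clopen nonempty pieces -/
lemma exists_transfer : ∀ A B : Set X, ∃ g g' : X → X,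
    IsClopen A → A.Nonempty → IsClopen B → B.Nonempty →
    ((∀ a ∈ A, g a ∈ B) ∧ (∀ b ∈ B, g' b ∈ A) ∧ (∀ a ∈ A, g' (g a) = a) ∧
      (∀ b ∈ B, g (g' b) = b) ∧ ContinuousOn g A ∧ ContinuousOn g' B) := by
  classical
  intro A B
  by_cases hA : IsClopen A ∧ A.Nonempty ∧ IsClopen B ∧ B.Nonempty
  · obtain ⟨hA1, hA2, hB1, hB2⟩ := hA
    obtain ⟨eA⟩ := clopen_homeo hA1 hA2
    obtain ⟨eB⟩ := clopen_homeo hB1 hB2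
    set e : ↥A ≃ₜ ↥B := eA.trans eB.symm with he
    refine ⟨fun a => if h : a ∈ A then ↑(e ⟨a, h⟩) else a,
            fun b => if h : b ∈ B then ↑(e.symm ⟨b, h⟩) else b,
            fun _ _ _ _ => ⟨?_, ?_, ?_, ?_, ?_, ?_⟩⟩
    · intro a ha; beta_reduce; rw [dif_pos ha]; exact (e ⟨a, ha⟩).2
    · intro b hb; beta_reduce; rw [dif_pos hb]; exact (e.symm ⟨b, hb⟩).2
    · intro a ha
      beta_reduce
      rw [dif_pos ha, dif_pos (e ⟨a, ha⟩).2]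
      have : (⟨↑(e ⟨a, ha⟩), (e ⟨a, ha⟩).2⟩ : ↥B) = e ⟨a, ha⟩ := Subtype.ext rfl
      rw [this, Homeomorph.symm_apply_apply]
    · intro b hb
      beta_reduce
      rw [dif_pos hb, dif_pos (e.symm ⟨b, hb⟩).2]
      have : (⟨↑(e.symm ⟨b, hb⟩), (e.symm ⟨b, hb⟩).2⟩ : ↥A) = e.symm ⟨b, hb⟩ := Subtype.ext rfl
      rw [this, Homeomorph.apply_symm_apply]
    · rw [continuousOn_iff_continuous_restrict]
      have : (A.domRestrict fun a => if h : a ∈ A then ↑(e ⟨a, h⟩) else a)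
          = fun a : ↥A => ↑(e a) := by
        funext a
        simp only [Set.domRestrict_apply, dif_pos a.2]
      rw [this]
      exact continuous_subtype_val.comp e.continuous
    · rw [continuousOn_iff_continuous_restrict]
      have : (B.domRestrict fun b => if h : b ∈ B then ↑(e.symm ⟨b, h⟩) else b)
          = fun b : ↥B => ↑(e.symm b) := by
        funext b
        simp only [Set.domRestrict_apply, dif_pos b.2]
      rw [this]
      exact continuous_subtype_val.comp e.symm.continuous
  · refine ⟨id, id, fun h1 h2 h3 h4 => absurd ⟨h1, h2, h3, h4⟩ hA⟩

/-- The main extension theorem, in relational form. -/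
theorem main_ext {P K : Set X} {R : X → X → Prop} (D : KRData P K R) :
    ∃ F : X ≃ₜ X, ∀ x y, R x y → F x = y := by
  classical
  obtain ⟨SC⟩ := exists_scheme D
  set D' := D.swap with hD'
  set SC' := SC.swap D with hSC'
  choose g g' hg using exists_transfer
  -- choices of images and preimages
  have himg : ∀ x, ∃ y, x ∈ P → R x y := by
    intro x
    by_cases h : x ∈ P
    · obtain ⟨y, hy⟩ := (D.dom x).2 h
      exact ⟨y, fun _ => hy⟩
    · exact ⟨x, fun h' => absurd h' h⟩
  choose rimg hrimg using himg
  have hpre : ∀ y, ∃ x, y ∈ K → R x y := by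
    intro y
    by_cases h : y ∈ K
    · obtain ⟨x, hx⟩ := (D.ran y).2 h
      exact ⟨x, fun _ => hx⟩
    · exact ⟨y, fun h' => absurd h' h⟩
  choose rpre hrpre using hpre
  set Fm : X → X := fun x => if x ∈ P then rimg x else g (SC.tU D x) (SC.tV D x) x with hFm
  set Gm : X → X := fun y => if y ∈ K then rpre y else
    g' (SC'.tV D' y) (SC'.tU D' y) y with hGm
  -- terminal piece properties on the left
  have hprops : ∀ x, x ∉ P → IsClopen (SC.tU D x) ∧ (SC.tU D x).Nonempty ∧
      IsClopen (SC.tV D x) ∧ (SC.tV D x).Nonempty ∧ SC.tU D x ∩ P = ∅ ∧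
      SC.tV D x ∩ K = ∅ := by
    intro x hx
    have h1 : IsClopen (SC.tU D x) := ((SC.S _).clopen _).1
    have h2 : (SC.tU D x).Nonempty := ⟨x, SC.mem_tU D x⟩
    have h3 : IsClopen (SC.tV D x) := ((SC.S _).clopen _).2
    have h4 : (SC.tV D x).Nonempty := ((SC.S _).nonemp _).1 h2
    have h5 : SC.tU D x ∩ P = ∅ := SC.tU_trace D hx
    have h6 : SC.tV D x ∩ K = ∅ := by
      rw [← Set.not_nonempty_iff_eq_empty] at h5 ⊢
      intro hc
      exact h5 (((SC.S _).trace_ne D _).2 hc)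
    exact ⟨h1, h2, h3, h4, h5, h6⟩
  -- terminal piece properties on the right
  have hprops' : ∀ y, y ∉ K → IsClopen (SC'.tU D' y) ∧ (SC'.tU D' y).Nonempty ∧
      IsClopen (SC'.tV D' y) ∧ (SC'.tV D' y).Nonempty ∧ SC'.tU D' y ∩ K = ∅ ∧
      SC'.tV D' y ∩ P = ∅ := by
    intro y hy
    have h1 : IsClopen (SC'.tU D' y) := ((SC'.S _).clopen _).1
    have h2 : (SC'.tU D' y).Nonempty := ⟨y, SC'.mem_tU D' y⟩
    have h3 : IsClopen (SC'.tV D' y) := ((SC'.S _).clopen _).2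
    have h4 : (SC'.tV D' y).Nonempty := ((SC'.S _).nonemp _).1 h2
    have h5 : SC'.tU D' y ∩ K = ∅ := SC'.tU_trace D' hy
    have h6 : SC'.tV D' y ∩ P = ∅ := by
      rw [← Set.not_nonempty_iff_eq_empty] at h5 ⊢
      intro hc
      exact h5 (((SC'.S _).trace_ne D' _).2 hc)
    exact ⟨h1, h2, h3, h4, h5, h6⟩
  -- value of Fm outside P
  have hFm_out : ∀ x, x ∉ P → Fm x ∈ SC.tV D x := by
    intro x hx
    obtain ⟨h1, h2, h3, h4, h5, h6⟩ := hprops x hx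
    have := (hg _ _ h1 h2 h3 h4).1 x (SC.mem_tU D x)
    rw [hFm]
    simp only [if_neg hx]
    exact this
  have hGm_out : ∀ y, y ∉ K → Gm y ∈ SC'.tV D' y := by
    intro y hy
    obtain ⟨h1, h2, h3, h4, h5, h6⟩ := hprops' y hy
    have := (hg _ _ h3 h4 h1 h2).2.1 y (SC'.mem_tU D' y)
    rw [hGm]
    simp only [if_neg hy]
    exact this
  have hFm_in : ∀ x y, R x y → Fm x = y := by
    intro x y hr
    have hx := D.mem_P hr
    rw [hFm]
    simp only [if_pos hx]
    exact D.funct (hrimg x hx) hr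
  have hGm_in : ∀ y x, R x y → Gm y = x := by
    intro y x hr
    have hy := D.mem_K hr
    rw [hGm]
    simp only [if_pos hy]
    exact D.inj (hrpre y hy) hr
  -- swapped-side stability of the terminal pair of x ∉ P
  have hstabR : ∀ x, x ∉ P → ∀ w, w ∈ SC.tV D x →
      w ∉ K ∧ SC'.tU D' w = SC.tV D x ∧ SC'.tV D' w = SC.tU D x := by
    intro x hx w hw
    have htr : (SC'.S (SC.NN D x)).U (SC.idxAt (SC.NN D x) x) ∩ K = ∅ :=
      (hprops x hx).2.2.2.2.2
    exact SC'.stab D' htr hw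
  -- left-side stability of the terminal pair of y ∉ K
  have hstabL : ∀ y, y ∉ K → ∀ z, z ∈ SC'.tV D' y →
      z ∉ P ∧ SC.tU D z = SC'.tV D' y ∧ SC.tV D z = SC'.tU D' y := by
    intro y hy z hz
    have htr : (SC.S (SC'.NN D' y)).U (SC'.idxAt (SC'.NN D' y) y) ∩ P = ∅ :=
      (hprops' y hy).2.2.2.2.2
    exact SC.stab D htr hz
  -- the two-sided inverse properties
  have hGF : ∀ x, Gm (Fm x) = x := by
    intro x
    by_cases hx : x ∈ P
    · have hr : R x (rimg x) := hrimg x hx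
      have h1 : Fm x = rimg x := hFm_in x (rimg x) hr
      rw [h1]
      exact hGm_in (rimg x) x hr
    · obtain ⟨h1, h2, h3, h4, h5, h6⟩ := hprops x hx
      have hmem : Fm x ∈ SC.tV D x := hFm_out x hx
      obtain ⟨hK, hs1, hs2⟩ := hstabR x hx (Fm x) hmem
      rw [hGm]
      simp only [if_neg hK]
      rw [hs1, hs2]
      have hFval : Fm x = g (SC.tU D x) (SC.tV D x) x := by
        rw [hFm]; simp only [if_neg hx]
      rw [hFval]
      exact (hg _ _ h1 h2 h3 h4).2.2.1 x (SC.mem_tU D x)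
  have hFG : ∀ y, Fm (Gm y) = y := by
    intro y
    by_cases hy : y ∈ K
    · have hr : R (rpre y) y := hrpre y hy
      have h1 : Gm y = rpre y := hGm_in y (rpre y) hr
      rw [h1]
      exact hFm_in (rpre y) y hr
    · obtain ⟨h1, h2, h3, h4, h5, h6⟩ := hprops' y hy
      have hmem : Gm y ∈ SC'.tV D' y := hGm_out y hy
      obtain ⟨hP, hs1, hs2⟩ := hstabL y hy (Gm y) hmem
      rw [hFm]
      simp only [if_neg hP]
      rw [hs1, hs2]
      have hGval : Gm y = g' (SC'.tV D' y) (SC'.tU D' y) y := by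
        rw [hGm]; simp only [if_neg hy]
      rw [hGval]
      exact (hg _ _ h3 h4 h1 h2).2.2.2.1 y (SC'.mem_tU D' y)
  -- continuity of Fm
  have hFc : Continuous Fm := by
    rw [continuous_iff_continuousAt]
    intro x
    by_cases hx : x ∈ P
    · exact SC.continuousAt_of D hFm_in hFm_out (hrimg x hx)
    · obtain ⟨h1, h2, h3, h4, h5, h6⟩ := hprops x hx
      have hco : ContinuousOn (g (SC.tU D x) (SC.tV D x)) (SC.tU D x) :=
        (hg _ _ h1 h2 h3 h4).2.2.2.2.1
      have hca : ContinuousAt (g (SC.tU D x) (SC.tV D x)) x :=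
        hco.continuousAt (h1.2.mem_nhds (SC.mem_tU D x))
      apply hca.congr
      filter_upwards [h1.2.mem_nhds (SC.mem_tU D x)] with x' hx'
      obtain ⟨hx'P, ht1, ht2⟩ := SC.stab D h5 hx'
      have ht1' : SC.tU D x' = SC.tU D x := ht1
      have ht2' : SC.tV D x' = SC.tV D x := ht2
      rw [hFm]
      simp only [if_neg hx'P]
      rw [ht1', ht2']
  -- continuity of Gm
  have hGc : Continuous Gm := by
    rw [continuous_iff_continuousAt]
    intro y
    by_cases hy : y ∈ K
    · have hGm_in' : ∀ y x, flip R y x → Gm y = x := fun y x h => hGm_in y x h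
      exact SC'.continuousAt_of D' hGm_in' hGm_out
        (show flip R y (rpre y) from hrpre y hy)
    · obtain ⟨h1, h2, h3, h4, h5, h6⟩ := hprops' y hy
      have hco : ContinuousOn (g' (SC'.tV D' y) (SC'.tU D' y)) (SC'.tU D' y) :=
        (hg _ _ h3 h4 h1 h2).2.2.2.2.2
      have hca : ContinuousAt (g' (SC'.tV D' y) (SC'.tU D' y)) y :=
        hco.continuousAt (h1.2.mem_nhds (SC'.mem_tU D' y))
      apply hca.congr
      filter_upwards [h1.2.mem_nhds (SC'.mem_tU D' y)] with y' hy'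
      obtain ⟨hy'K, ht1, ht2⟩ := SC'.stab D' h5 hy'
      have ht1' : SC'.tU D' y' = SC'.tU D' y := ht1
      have ht2' : SC'.tV D' y' = SC'.tV D' y := ht2
      rw [hGm]
      simp only [if_neg hy'K]
      rw [ht1', ht2']
  exact ⟨Homeomorph.mk ⟨Fm, Gm, hGF, hFG⟩ hFc hGc, hFm_in⟩
end KR

/-- Every homeomorphism `f` between two compact subsets `P` and `K` of the space `ℕ^ℕ`
(the irrationals) extends to a homeomorphism of `ℕ^ℕ` onto itself. -/
theorem stmt5 (P K : Set (ℕ → ℕ)) (hP : IsCompact P) (hK : IsCompact K)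
    (f : ↥P ≃ₜ ↥K) :
    ∃ F : (ℕ → ℕ) ≃ₜ (ℕ → ℕ), ∀ p : P, F (p : ℕ → ℕ) = (f p : ℕ → ℕ) := by
  classical
  set R : (ℕ → ℕ) → (ℕ → ℕ) → Prop :=
    fun x y => ∃ p : ↥P, ↑p = x ∧ (↑(f p) : ℕ → ℕ) = y with hR
  have D : KR.KRData P K R := by
    refine ⟨hP, hK, ?_, ?_, ?_, ?_, ?_, ?_⟩
    · intro x
      constructor
      · rintro ⟨y, p, rfl, -⟩
        exact p.2
      · intro hx
        exact ⟨↑(f ⟨x, hx⟩), ⟨x, hx⟩, rfl, rfl⟩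
    · intro y
      constructor
      · rintro ⟨x, p, -, rfl⟩
        exact (f p).2
      · intro hy
        refine ⟨↑(f.symm ⟨y, hy⟩), f.symm ⟨y, hy⟩, rfl, ?_⟩
        rw [Homeomorph.apply_symm_apply]
    · rintro x y y' ⟨p, rfl, rfl⟩ ⟨p', hp', rfl⟩
      have : p = p' := Subtype.ext hp'.symm
      rw [this]
    · rintro x x' y ⟨p, rfl, hy⟩ ⟨p', rfl, hy'⟩
      have h1 : f p = f p' := Subtype.ext (hy.trans hy'.symm)
      have : p = p' := f.toEquiv.injective h1
      rw [this]
    · intro n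
      obtain ⟨m, hm⟩ := KR.unif_cont hP (fun p => ↑(f p))
        (continuous_subtype_val.comp f.continuous) n
      refine ⟨m, ?_⟩
      rintro x y x' y' ⟨p, rfl, rfl⟩ ⟨p', rfl, rfl⟩ hc
      exact hm p p' hc
    · intro n
      obtain ⟨m, hm⟩ := KR.unif_cont hK (fun q => ↑(f.symm q))
        (continuous_subtype_val.comp f.symm.continuous) n
      refine ⟨m, ?_⟩
      rintro x y x' y' ⟨p, rfl, rfl⟩ ⟨p', rfl, rfl⟩ hc
      have h1 := hm (f p) (f p') hc
      simp only [Homeomorph.symm_apply_apply] at h1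
      exact h1
  obtain ⟨F, hF⟩ := KR.main_ext D
  exact ⟨F, fun p => hF ↑p ↑(f p) ⟨p, rfl, rfl⟩⟩
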